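/- Let j ≥ 3 and 0 ≤ r ≤ j−3 be integers. Then the rational number Σ_{s=r}^{j−1} (−1)^s · (1/(j+1−s)) · binom(j+1−s, s−r) · C_{j−s−1} equals 0, where C_n is the n-th Catalan number and binom(a,b) = 0 when b < 0 or b > a. -/

import Mathlib

/-- The binomial coefficient `binom a b : ℚ` for integer arguments, equal to `0`
when `b < 0` or `b > a`. -/
def binom (a b : ℤ) : ℚ :=
  if 0 ≤ b ∧ b ≤ a then (a.toNat.choose b.toNat : ℚ) else 0

namespace ArAux

/-- The `k`-th summand (in factorial form), as a function of `n = j - r`. -/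
def Tq (n k : ℕ) : ℚ :=
  if 2*k ≤ n+1 then
    (-1)^k * ((2*n-2*k-2).factorial : ℚ) /
      ((k.factorial : ℚ) * ((n+1-2*k).factorial : ℚ) * ((n-k-1).factorial : ℚ))
  else 0

/-- Gosper certificate. -/
def Rq (n k : ℕ) : ℚ :=
  (16*(k:ℚ)^3 + (4*(n:ℚ)^2-28*(n:ℚ))*(k:ℚ)^2
      + (-4*(n:ℚ)^3+14*(n:ℚ)^2+2*(n:ℚ)-4)*(k:ℚ)) /
    ((n:ℚ)*((n:ℚ)-1)*((n:ℚ)+1)*((n:ℚ)-2))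

lemma fac1 (a : ℕ) : ((a+1).factorial : ℚ) = ((a:ℚ)+1)*(a.factorial : ℚ) := by
  rw [Nat.factorial_succ]; push_cast; ring

lemma fac2 (a : ℕ) : ((a+2).factorial : ℚ) = ((a:ℚ)+2)*((a:ℚ)+1)*(a.factorial : ℚ) := by
  rw [show a+2 = (a+1)+1 from rfl, fac1, fac1]; push_cast; ring

lemma facQ_ne (a : ℕ) : ((a.factorial : ℚ)) ≠ 0 := by
  exact_mod_cast (Nat.factorial_pos a).ne'

lemma step (n k : ℕ) (hn : 3 ≤ n) (hk : k < n) :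
    Tq n k = Rq n (k+1) * Tq n (k+1) - Rq n k * Tq n k := by
  rcases lt_or_ge (2*k+1) (n+1) with hmain | hrest
  · -- main case : 2*k + 1 ≤ n
    have hkn : 2*k+1 ≤ n := by omega
    obtain ⟨m, rfl⟩ : ∃ m, n = 2*k+1+m := ⟨n - (2*k+1), by omega⟩
    have ht1 : 2*k ≤ (2*k+1+m)+1 := by omega
    have ht2 : 2*(k+1) ≤ (2*k+1+m)+1 := by omega
    rw [Tq, Tq, if_pos ht1, if_pos ht2]
    rcases Nat.eq_zero_or_pos k with rfl | hk0
    · -- k = 0, so m ≥ 2 since n ≥ 3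
      obtain ⟨m', rfl⟩ : ∃ m', m = m'+2 := ⟨m - 2, by omega⟩
      rw [show 2*(2*0+1+(m'+2))-2*0-2 = (2*m'+2)+2 by omega,
          show (2*0+1+(m'+2))+1-2*0 = m'+2+2 by omega,
          show (2*0+1+(m'+2))-0-1 = m'+2 by omega,
          show 2*(2*0+1+(m'+2))-2*(0+1)-2 = 2*m'+2 by omega,
          show (2*0+1+(m'+2))+1-2*(0+1) = m'+2 by omega,
          show (2*0+1+(m'+2))-(0+1)-1 = m'+1 by omega]
      rw [show (2*m'+2)+2 = (2*m'+2)+2 from rfl, fac2 (2*m'+2), fac2 (m'+2),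
          show m'+2 = m'+1+1 from rfl, fac1 (m'+1), fac1 m',
          show 2*m'+2 = 2*m'+1+1 from rfl, fac1 (2*m'+1), fac1 (2*m')]
      rw [Rq, Rq]
      have e1 : ((2*0+1+(m'+1+1) : ℕ) : ℚ) = (m':ℚ)+3 := by push_cast; ring
      rw [e1]
      have h2 : ((m':ℚ)+3) ≠ 0 := by positivity
      have h3 : ((m':ℚ)+3)-1 ≠ 0 := by
        have : (0:ℚ) < (m':ℚ)+2 := by positivity
        intro h; apply this.ne'; linarith
      have h4 : ((m':ℚ)+3)+1 ≠ 0 := by positivity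
      have h5 : ((m':ℚ)+3)-2 ≠ 0 := by
        have : (0:ℚ) < (m':ℚ)+1 := by positivity
        intro h; apply this.ne'; linarith
      have h6 := facQ_ne (2*m'+1)
      have h7 := facQ_ne (2*m')
      have h8 := facQ_ne (m'+1)
      have h9 := facQ_ne m'
      field_simp
      push_cast
      ring
    · -- k ≥ 1
      obtain ⟨k', rfl⟩ : ∃ k', k = k'+1 := ⟨k - 1, by omega⟩
      rw [show 2*(2*(k'+1)+1+m)-2*(k'+1)-2 = (2*k'+2*m)+2 by omega,
          show (2*(k'+1)+1+m)+1-2*(k'+1) = m+2 by omega,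
          show (2*(k'+1)+1+m)-(k'+1)-1 = (k'+m)+1 by omega,
          show 2*(2*(k'+1)+1+m)-2*(k'+1+1)-2 = 2*k'+2*m by omega,
          show (2*(k'+1)+1+m)+1-2*(k'+1+1) = m by omega,
          show (2*(k'+1)+1+m)-(k'+1+1)-1 = k'+m by omega]
      rw [fac2 (2*k'+2*m), fac2 m, fac1 (k'+m), fac1 k',
          show k'+1+1 = k'+2 from rfl, fac2 k']
      rw [Rq, Rq]
      have e1 : ((2*(k'+1)+1+m : ℕ) : ℚ) = 2*(k':ℚ)+(m:ℚ)+3 := by push_cast; ring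
      rw [e1]
      have hx : (0:ℚ) ≤ (k':ℚ) := Nat.cast_nonneg _
      have hy : (0:ℚ) ≤ (m:ℚ) := Nat.cast_nonneg _
      have h2 : (2*(k':ℚ)+(m:ℚ)+3) ≠ 0 := by positivity
      have h3 : (2*(k':ℚ)+(m:ℚ)+3)-1 ≠ 0 := by
        have : (0:ℚ) < 2*(k':ℚ)+(m:ℚ)+2 := by positivity
        intro h; apply this.ne'; linarith
      have h4 : (2*(k':ℚ)+(m:ℚ)+3)+1 ≠ 0 := by positivity
      have h5 : (2*(k':ℚ)+(m:ℚ)+3)-2 ≠ 0 := by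
        have : (0:ℚ) < 2*(k':ℚ)+(m:ℚ)+1 := by positivity
        intro h; apply this.ne'; linarith
      have h6 := facQ_ne (2*k'+2*m)
      have h7 := facQ_ne m
      have h8 := facQ_ne (k'+m)
      have h9 := facQ_ne k'
      field_simp
      push_cast
      ring
  · -- boundary / tail : 2*k ≥ n+1, i.e. 2*k ∈ {n+1, nope also n handled}… here 2*k+1 ≥ n+1
    -- cases: 2*k = n, 2*k = n+1, 2*k ≥ n+2
    rcases lt_or_ge (n+1) (2*k) with htail | hbd
    · -- 2*k ≥ n+2 : everything vanishes
      rw [Tq, Tq, if_neg (by omega), if_neg (by omega)]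
      ring
    · -- 2*k = n or 2*k = n+1 : last term, Rq n k = -1, Tq n (k+1) = 0
      have hT1 : Tq n (k+1) = 0 := by rw [Tq, if_neg (by omega)]
      have hR : Rq n k = -1 := by
        rcases Nat.eq_or_lt_of_le hbd with heq | hlt
        · -- 2*k = n + 1, n odd, k ≥ 2
          have hk2 : 2 ≤ k := by omega
          have e1 : (n:ℚ) = 2*(k:ℚ)-1 := by
            have : (( n+1 :ℕ):ℚ) = ((2*k :ℕ):ℚ) := by exact_mod_cast congrArg Nat.cast heq.symm
            push_cast at this; linarith
          rw [Rq, e1]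
          have hkp : (2:ℚ) ≤ (k:ℚ) := by exact_mod_cast hk2
          have d1 : (2*(k:ℚ)-1) ≠ 0 := by intro h; linarith
          have d2 : (2*(k:ℚ)-1)-1 ≠ 0 := by intro h; linarith
          have d3 : (2*(k:ℚ)-1)+1 ≠ 0 := by intro h; linarith
          have d4 : (2*(k:ℚ)-1)-2 ≠ 0 := by intro h; linarith
          rw [div_eq_iff (mul_ne_zero (mul_ne_zero (mul_ne_zero d1 d2) d3) d4)]
          ring
        · -- 2*k = n, n even, k ≥ 2
          have heq : 2*k = n := by omega
          have hk2 : 2 ≤ k := by omega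
          have e1 : (n:ℚ) = 2*(k:ℚ) := by exact_mod_cast congrArg Nat.cast heq.symm
          rw [Rq, e1]
          have hkp : (2:ℚ) ≤ (k:ℚ) := by exact_mod_cast hk2
          have d1 : (2*(k:ℚ)) ≠ 0 := by intro h; linarith
          have d2 : (2*(k:ℚ))-1 ≠ 0 := by intro h; linarith
          have d3 : (2*(k:ℚ))+1 ≠ 0 := by intro h; linarith
          have d4 : (2*(k:ℚ))-2 ≠ 0 := by intro h; linarith
          rw [div_eq_iff (mul_ne_zero (mul_ne_zero (mul_ne_zero d1 d2) d3) d4)]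
          ring
      rw [hT1, hR]
      ring

lemma sum_Tq (n : ℕ) (hn : 3 ≤ n) : ∑ k ∈ Finset.range n, Tq n k = 0 := by
  have h : ∀ k ∈ Finset.range n,
      Tq n k = Rq n (k+1) * Tq n (k+1) - Rq n k * Tq n k := fun k hk =>
    step n k hn (Finset.mem_range.mp hk)
  rw [Finset.sum_congr rfl h, Finset.sum_range_sub (fun k => Rq n k * Tq n k)]
  have h1 : Tq n n = 0 := by rw [Tq, if_neg (by omega)]
  have h2 : Rq n 0 = 0 := by simp [Rq]
  rw [h1, h2]; ring

lemma binom_natCast (a b : ℕ) :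
    binom (a : ℤ) (b : ℤ) = if b ≤ a then (a.choose b : ℚ) else 0 := by
  rw [binom]
  by_cases h : b ≤ a
  · rw [if_pos ⟨Int.natCast_nonneg b, by exact_mod_cast h⟩, if_pos h,
      Int.toNat_natCast, Int.toNat_natCast]
  · rw [if_neg (by push_neg; intro _; exact_mod_cast Nat.lt_of_not_le h), if_neg h]

lemma catalan_cast (m : ℕ) :
    (catalan m : ℚ) * ((m.factorial : ℚ) * ((m+1).factorial : ℚ)) = ((2*m).factorial : ℚ) := by
  have h1 := succ_mul_catalan_eq_centralBinom m
  have h2 : (2*m).choose m * m.factorial * (2*m - m).factorial = (2*m).factorial :=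
    Nat.choose_mul_factorial_mul_factorial (by omega)
  have h3 : 2*m - m = m := by omega
  rw [h3] at h2
  have : catalan m * (m.factorial * (m+1).factorial) = (2*m).factorial := by
    rw [Nat.factorial_succ]
    calc catalan m * (m.factorial * ((m+1) * m.factorial))
        = ((m+1) * catalan m) * m.factorial * m.factorial := by ring
      _ = (2*m).factorial := by rw [h1, Nat.centralBinom, h2]
  exact_mod_cast congrArg (Nat.cast : ℕ → ℚ) this

end ArAux

/-- For `j ≥ 3` and `0 ≤ r ≤ j−3`, the sum
`Σ_{s=r}^{j−1} (−1)^s·(1/(j+1−s))·binom(j+1−s, s−r)·C_{j−s−1}` vanishes. -/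
theorem A_r_vanishes (j r : ℕ) (hj : 3 ≤ j) (hr : r ≤ j - 3) :
    ∑ s ∈ Finset.Icc r (j - 1),
      (-1 : ℚ) ^ s * (1 / ((j : ℚ) + 1 - s)) *
        binom ((j : ℤ) + 1 - s) ((s : ℤ) - r) * catalan (j - s - 1) = 0 := by
  open ArAux in
  set n := j - r with hn
  have hjr : j = r + n := by omega
  have hn3 : 3 ≤ n := by omega
  have hIcc : Finset.Icc r (j-1) = Finset.Ico r j := by
    rw [show j = (j-1)+1 by omega, Finset.Ico_add_one_right_eq_Icc, show (j-1)+1-1 = j-1 by omega]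
  rw [hIcc, Finset.sum_Ico_eq_sum_range]
  have hub : j - r = n := rfl
  rw [hub]
  have key : ∀ i ∈ Finset.range n,
      (-1 : ℚ) ^ (r+i) * (1 / ((j : ℚ) + 1 - (r+i : ℕ))) *
        binom ((j : ℤ) + 1 - (r+i : ℕ)) (((r+i : ℕ) : ℤ) - r) * catalan (j - (r+i) - 1)
      = (-1 : ℚ)^r * ArAux.Tq n i := by
    intro i hi
    have hi' : i < n := Finset.mem_range.mp hi
    have hb : ((j:ℤ) + 1 - ((r+i : ℕ) : ℤ)) = ((n+1-i : ℕ) : ℤ) := by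
      push_cast; omega
    have hb2 : (((r+i : ℕ) : ℤ)) - (r : ℤ) = ((i:ℕ) : ℤ) := by push_cast; ring
    rw [hb, hb2, ArAux.binom_natCast]
    have hq : ((j : ℚ) + 1 - ((r+i : ℕ) : ℚ)) = (n:ℚ) + 1 - (i:ℚ) := by
      rw [hjr]; push_cast; ring
    have hidx : j - (r+i) - 1 = n - i - 1 := by omega
    rw [hq, hidx]
    by_cases hcond : 2*i ≤ n+1
    · rw [if_pos (by omega : i ≤ n+1-i)]
      rw [ArAux.Tq, if_pos hcond]
      -- choose in factorial form
      have hch : ((n+1-i).choose i : ℚ) * ((i.factorial : ℚ) * ((n+1-2*i).factorial : ℚ))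
          = ((n+1-i).factorial : ℚ) := by
        have h := Nat.choose_mul_factorial_mul_factorial (by omega : i ≤ n+1-i)
        rw [show n+1-i-i = n+1-2*i by omega] at h
        exact_mod_cast congrArg (Nat.cast : ℕ → ℚ) (by rw [← h]; ring)
      have hcat : (catalan (n-i-1) : ℚ) *
          (((n-i-1).factorial : ℚ) * ((n-i).factorial : ℚ))
          = ((2*n-2*i-2).factorial : ℚ) := by
        have h := ArAux.catalan_cast (n-i-1)
        rw [show (n-i-1)+1 = n-i by omega, show 2*(n-i-1) = 2*n-2*i-2 by omega] at h
        exact h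
      have hfp : ((n+1-i).factorial : ℚ) = ((n:ℚ)+1-(i:ℚ)) * ((n-i).factorial : ℚ) := by
        rw [show n+1-i = (n-i)+1 by omega, ArAux.fac1]
        congr 1
        push_cast [Nat.cast_sub (by omega : i ≤ n)]
        ring
      have hQ : ((n:ℚ)+1-(i:ℚ)) ≠ 0 := by
        have h1 : (i:ℚ) ≤ (n:ℚ) := by exact_mod_cast hi'.le
        intro h; linarith
      have e1 : ((n+1-i).choose i : ℚ)
          = ((n:ℚ)+1-(i:ℚ)) * ((n-i).factorial : ℚ) /
            ((i.factorial : ℚ) * ((n+1-2*i).factorial : ℚ)) := by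
        rw [eq_div_iff (by positivity), hch, hfp]
      have e2 : (catalan (n-i-1) : ℚ)
          = ((2*n-2*i-2).factorial : ℚ) /
            (((n-i-1).factorial : ℚ) * ((n-i).factorial : ℚ)) := by
        rw [eq_div_iff (by positivity), hcat]
      rw [e1, e2, pow_add]
      have f1 := ArAux.facQ_ne i
      have f2 := ArAux.facQ_ne (n+1-2*i)
      have f3 := ArAux.facQ_ne (n-i-1)
      have f4 := ArAux.facQ_ne (n-i)
      field_simp
    · rw [if_neg (by omega : ¬ i ≤ n+1-i), ArAux.Tq, if_neg hcond]
      ring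
  rw [Finset.sum_congr rfl key, ← Finset.mul_sum, ArAux.sum_Tq n hn3, mul_zero]
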